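/- Let q : ℂ → ℂ be a Schwartz function and let k ∈ ℂ. Then F ↦ S^k_q[F] defines a bounded linear operator on L^∞(ℂ) which is a compact operator. -/

import Mathlib

open MeasureTheory Complex ComplexConjugate Filter Bornology
open scoped ENNReal Topology SchwartzMap

noncomputable section

/-- `e_k(z) = exp(i(conj k · z + k · conj z)/2)`. -/
def ek (k z : ℂ) : ℂ := Complex.exp (Complex.I * (conj k * z + k * conj z) / 2)

/-- The solid Cauchy transform `∂̄⁻¹[h](z) = (1/π) ∫ h(w)/(z-w) dA(w)`. -/
def dbarInv (h : ℂ → ℂ) (z : ℂ) : ℂ := (Real.pi : ℂ)⁻¹ * ∫ w : ℂ, h w / (z - w)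

/-- The solid Cauchy transform `∂_z⁻¹[h](z) = (1/π) ∫ h(w)/(conj z - conj w) dA(w)`. -/
def dzInv (h : ℂ → ℂ) (z : ℂ) : ℂ := (Real.pi : ℂ)⁻¹ * ∫ w : ℂ, h w / (conj z - conj w)

/-- The operator `S^k_q[F] = ∂̄⁻¹[e_{-k} q ∂_z⁻¹[e_k conj(q) F]]`. -/
def Sk (k : ℂ) (q F : ℂ → ℂ) : ℂ → ℂ :=
  dbarInv fun z => ek (-k) z * q z * dzInv (fun w => ek k w * conj (q w) * F w) z

/-- The Fourier transform on `ℂ ≅ ℝ²`. -/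
def FT (f : ℂ → ℂ) (ξ : ℂ) : ℂ :=
  ∫ z : ℂ, Complex.exp (-(2 * Real.pi * Complex.I) * ((z.re * ξ.re + z.im * ξ.im : ℝ) : ℂ)) * f z

/-- The inverse Fourier transform on `ℂ ≅ ℝ²`. -/
def FTinv (f : ℂ → ℂ) (x : ℂ) : ℂ :=
  ∫ ξ : ℂ, Complex.exp ((2 * Real.pi * Complex.I) * ((x.re * ξ.re + x.im * ξ.im : ℝ) : ℂ)) * f ξ

/-- `D^s`, the Fourier multiplier with symbol `|ξ|^s`. -/
def Ds (s : ℝ) (f : ℂ → ℂ) : ℂ → ℂ :=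
  FTinv fun ξ => ((‖ξ‖ ^ s : ℝ) : ℂ) * FT f ξ

/-- The weighted Sobolev norm
`‖q‖_{H^{s,s}} = max {‖q‖₂, ‖D^s q‖₂, ‖|·|^s q‖₂}`, where by Plancherel
`‖D^s q‖₂ = ‖ |ξ|^s (FT q)(ξ) ‖₂`. -/
def HssNorm (s : ℝ) (q : ℂ → ℂ) : ℝ≥0∞ :=
  max (eLpNorm q 2 volume)
    (max (eLpNorm (fun ξ : ℂ => ((‖ξ‖ ^ s : ℝ) : ℂ) * FT q ξ) 2 volume)
      (eLpNorm (fun z : ℂ => ((‖z‖ ^ s : ℝ) : ℂ) * q z) 2 volume))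

/-- The Cauchy–Riemann operator `∂̄ = (∂/∂z₁ + i ∂/∂z₂)/2`. -/
def dbar (G : ℂ → ℂ) (z : ℂ) : ℂ := (fderiv ℝ G z 1 + Complex.I * fderiv ℝ G z Complex.I) / 2

end

namespace Stmt19Aux
open Metric Set

noncomputable section

/-- singular kernel comparison function `x ↦ (x √x)⁻¹ = x^{-3/2}` -/
def k32 (x : ℝ) : ℝ := (x * Real.sqrt x)⁻¹

lemma k32_nonneg {x : ℝ} (hx : 0 ≤ x) : 0 ≤ k32 x := by
  unfold k32; positivity

lemma k32_anti {x y : ℝ} (hx : 0 < x) (hxy : x ≤ y) : k32 y ≤ k32 x := by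
  unfold k32
  have h1 : Real.sqrt x ≤ Real.sqrt y := Real.sqrt_le_sqrt hxy
  have h2 : (0:ℝ) < Real.sqrt x := Real.sqrt_pos.2 hx
  have := mul_le_mul hxy h1 h2.le (by linarith)
  exact inv_anti₀ (by positivity) this

lemma measurable_k32 : Measurable k32 := by
  unfold k32
  exact (measurable_id.mul Real.continuous_sqrt.measurable).inv

lemma inv_le_k32 {x : ℝ} (hx0 : 0 ≤ x) (hx : x ≤ 1) : x⁻¹ ≤ k32 x := by
  rcases eq_or_lt_of_le hx0 with h | h
  · simp [k32, ← h]
  · unfold k32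
    apply inv_anti₀ (by positivity)
    have : Real.sqrt x ≤ 1 := by
      rw [show (1:ℝ) = Real.sqrt 1 by simp]
      exact Real.sqrt_le_sqrt hx
    nlinarith

lemma k32_le_one {x : ℝ} (hx : 1 ≤ x) : k32 x ≤ 1 := by
  unfold k32
  have h1 : (1:ℝ) ≤ Real.sqrt x := Real.one_le_sqrt.2 hx
  have : (1:ℝ) ≤ x * Real.sqrt x := by nlinarith
  simpa using inv_anti₀ one_pos this

lemma sqrt_pow' (x : ℝ) (hx : 0 ≤ x) (n : ℕ) : Real.sqrt (x ^ n) = (Real.sqrt x) ^ n := by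
  induction n with
  | zero => simp
  | succ m ih => rw [pow_succ, pow_succ, Real.sqrt_mul (pow_nonneg hx m), ih]

lemma integrableOn_k32_ball : IntegrableOn (fun u : ℂ => k32 ‖u‖) (ball (0:ℂ) 1) volume := by
  have hmeas : Measurable fun u : ℂ => k32 ‖u‖ := measurable_k32.comp measurable_norm
  refine ⟨(hmeas.aestronglyMeasurable).restrict, ?_⟩
  rw [hasFiniteIntegral_iff_ofReal (ae_of_all _ (fun u => k32_nonneg (norm_nonneg u)))]
  -- dyadic decomposition
  set A : ℕ → Set ℂ := fun n => {u : ℂ | (2:ℝ)⁻¹ ^ (n+1) ≤ ‖u‖} ∩ ball (0:ℂ) ((2:ℝ)⁻¹ ^ n)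
  have hcover : ball (0:ℂ) 1 ⊆ {0} ∪ ⋃ n, A n := by
    intro u hu
    rcases eq_or_ne u 0 with rfl | hu0
    · exact Or.inl rfl
    · have hun : 0 < ‖u‖ := norm_pos_iff.2 hu0
      have hu1 : ‖u‖ < 1 := by simpa [mem_ball_zero_iff] using hu
      have hex : ∃ m : ℕ, (2:ℝ)⁻¹ ^ m ≤ ‖u‖ := by
        obtain ⟨m, hm⟩ := exists_pow_lt_of_lt_one hun (by norm_num : (2:ℝ)⁻¹ < 1)
        exact ⟨m, hm.le⟩
      classical
      set m₀ := Nat.find hex with hm₀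
      have hfind := Nat.find_spec hex
      have hm0ne : m₀ ≠ 0 := by
        intro h
        rw [hm₀] at h
        have := Nat.find_spec hex
        rw [h, pow_zero] at this
        linarith
      obtain ⟨n, hn⟩ := Nat.exists_eq_succ_of_ne_zero hm0ne
      refine Or.inr (mem_iUnion.2 ⟨n, ?_⟩)
      constructor
      · show (2:ℝ)⁻¹ ^ (n+1) ≤ ‖u‖
        have : m₀ = n + 1 := hn
        rw [← this]; exact hfind
      · show u ∈ ball (0:ℂ) ((2:ℝ)⁻¹ ^ n)
        rw [mem_ball_zero_iff]
        by_contra hcon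
        push_neg at hcon
        have := Nat.find_min hex (m := n) (by omega)
        exact this hcon
  calc ∫⁻ u in ball (0:ℂ) 1, ENNReal.ofReal (k32 ‖u‖)
      ≤ ∫⁻ u in ({0} ∪ ⋃ n, A n : Set ℂ), ENNReal.ofReal (k32 ‖u‖) :=
        lintegral_mono_set hcover
    _ ≤ (∫⁻ u in ({0} : Set ℂ), ENNReal.ofReal (k32 ‖u‖)) +
        ∫⁻ u in (⋃ n, A n), ENNReal.ofReal (k32 ‖u‖) := lintegral_union_le _ _ _
    _ = ∫⁻ u in (⋃ n, A n), ENNReal.ofReal (k32 ‖u‖) := by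
        rw [setLIntegral_measure_zero _ _ (measure_singleton 0), zero_add]
    _ ≤ ∑' n, ∫⁻ u in A n, ENNReal.ofReal (k32 ‖u‖) := lintegral_iUnion_le _ _
    _ < ⊤ := by
        set r : ℝ := 2⁻¹ * Real.sqrt 2⁻¹ with hr
        have hsq : (0:ℝ) < Real.sqrt 2⁻¹ := Real.sqrt_pos.2 (by norm_num)
        have hrpos : 0 < r := by positivity
        have hterm : ∀ n, ∫⁻ u in A n, ENNReal.ofReal (k32 ‖u‖) ≤
            ENNReal.ofReal (r⁻¹) * ENNReal.ofReal (r⁻¹ * 4⁻¹) ^ n * (NNReal.pi : ℝ≥0∞) := by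
          intro n
          have hxpos : (0:ℝ) < (2:ℝ)⁻¹ ^ (n+1) := by positivity
          have h1 : ∫⁻ u in A n, ENNReal.ofReal (k32 ‖u‖) ≤
              ∫⁻ _ in A n, ENNReal.ofReal (k32 ((2:ℝ)⁻¹ ^ (n+1))) := by
            refine setLIntegral_mono' ?_ ?_
            · exact (measurableSet_le measurable_const measurable_norm).inter measurableSet_ball
            · intro u hu
              exact ENNReal.ofReal_le_ofReal (k32_anti hxpos hu.1)
          have h2 : volume (A n) ≤ ENNReal.ofReal ((2:ℝ)⁻¹ ^ n) ^ 2 * (NNReal.pi : ℝ≥0∞) := by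
            calc volume (A n) ≤ volume (ball (0:ℂ) ((2:ℝ)⁻¹ ^ n)) :=
                  measure_mono inter_subset_right
              _ = ENNReal.ofReal ((2:ℝ)⁻¹ ^ n) ^ 2 * (NNReal.pi : ℝ≥0∞) := Complex.volume_ball 0 _
          have hkey : k32 ((2:ℝ)⁻¹ ^ (n+1)) * (((2:ℝ)⁻¹ ^ n) ^ 2) = r⁻¹ * (r⁻¹ * 4⁻¹) ^ n := by
            unfold k32
            rw [sqrt_pow' _ (by norm_num)]
            have h4 : ((2:ℝ)⁻¹ ^ n) ^ 2 = (4:ℝ)⁻¹ ^ n := by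
              rw [← pow_mul, mul_comm, pow_mul]; norm_num
            rw [h4, ← mul_pow]
            rw [← hr, mul_pow r⁻¹, ← inv_pow, pow_succ, mul_inv]
            ring
          calc ∫⁻ u in A n, ENNReal.ofReal (k32 ‖u‖)
              ≤ ∫⁻ _ in A n, ENNReal.ofReal (k32 ((2:ℝ)⁻¹ ^ (n+1))) := h1
            _ = ENNReal.ofReal (k32 ((2:ℝ)⁻¹ ^ (n+1))) * volume (A n) := setLIntegral_const _ _
            _ ≤ ENNReal.ofReal (k32 ((2:ℝ)⁻¹ ^ (n+1))) *
                (ENNReal.ofReal ((2:ℝ)⁻¹ ^ n) ^ 2 * (NNReal.pi : ℝ≥0∞)) := by gcongr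
            _ = ENNReal.ofReal (r⁻¹) * ENNReal.ofReal (r⁻¹ * 4⁻¹) ^ n * (NNReal.pi : ℝ≥0∞) := by
                rw [← mul_assoc, ← ENNReal.ofReal_pow (by positivity), ← ENNReal.ofReal_mul
                  (k32_nonneg hxpos.le), hkey, ENNReal.ofReal_mul (by positivity),
                  ENNReal.ofReal_pow (by positivity)]
        have hsum : ∑' n, ∫⁻ u in A n, ENNReal.ofReal (k32 ‖u‖) ≤
            ENNReal.ofReal (r⁻¹) * (NNReal.pi : ℝ≥0∞) * ∑' n, ENNReal.ofReal (r⁻¹ * 4⁻¹) ^ n := by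
          rw [← ENNReal.tsum_mul_left]
          refine ENNReal.tsum_le_tsum (fun n => ?_)
          calc ∫⁻ u in A n, ENNReal.ofReal (k32 ‖u‖)
              ≤ ENNReal.ofReal (r⁻¹) * ENNReal.ofReal (r⁻¹ * 4⁻¹) ^ n * (NNReal.pi : ℝ≥0∞) :=
                hterm n
            _ = ENNReal.ofReal r⁻¹ * (NNReal.pi : ℝ≥0∞) * ENNReal.ofReal (r⁻¹ * 4⁻¹) ^ n := by ring
        refine lt_of_le_of_lt hsum ?_
        have hratio : ENNReal.ofReal (r⁻¹ * 4⁻¹) < 1 := by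
          rw [show (1:ℝ≥0∞) = ENNReal.ofReal 1 by simp]
          refine ENNReal.ofReal_lt_ofReal_iff_of_nonneg (by positivity) |>.2 ?_
          rw [show r⁻¹ * 4⁻¹ = (4 * r)⁻¹ by rw [mul_inv]; ring]
          have h14 : (1:ℝ) < 4 * r := by
            rw [hr]
            have : (1:ℝ)/2 < Real.sqrt 2⁻¹ := by
              rw [show (2:ℝ)⁻¹ = 1/2 by norm_num]
              have := Real.lt_sqrt (x := 1/2) (y := 1/2) (by norm_num)
              rw [this]; norm_num
            nlinarith
          rw [inv_lt_one_iff₀]; right; exact h14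
        rw [ENNReal.tsum_geometric]
        refine ENNReal.mul_lt_top (ENNReal.mul_lt_top ENNReal.ofReal_lt_top
          (by simp [ENNReal.coe_lt_top])) ?_
        simp [ENNReal.inv_lt_top, tsub_pos_iff_lt, hratio]

lemma k32_eq_inv_mul (x : ℝ) : k32 x = x⁻¹ * (Real.sqrt x)⁻¹ := by
  rw [k32, mul_inv]

lemma inv_sqrt_le_k32_add {a b : ℝ} (ha : 0 ≤ a) (hb : 0 ≤ b) :
    a⁻¹ * (Real.sqrt b)⁻¹ ≤ k32 a + k32 b := by
  have hK : 0 ≤ k32 a + k32 b := add_nonneg (k32_nonneg ha) (k32_nonneg hb)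
  rcases eq_or_lt_of_le ha with rfl | ha'
  · simpa using hK
  rcases eq_or_lt_of_le hb with rfl | hb'
  · simpa using hK
  rcases le_total a b with h | h
  · have h1 : (Real.sqrt b)⁻¹ ≤ (Real.sqrt a)⁻¹ :=
      inv_anti₀ (Real.sqrt_pos.2 ha') (Real.sqrt_le_sqrt h)
    calc a⁻¹ * (Real.sqrt b)⁻¹ ≤ a⁻¹ * (Real.sqrt a)⁻¹ :=
          mul_le_mul_of_nonneg_left h1 (by positivity)
      _ = k32 a := (k32_eq_inv_mul a).symm
      _ ≤ k32 a + k32 b := le_add_of_nonneg_right (k32_nonneg hb)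
  · have h1 : a⁻¹ ≤ b⁻¹ := inv_anti₀ hb' h
    calc a⁻¹ * (Real.sqrt b)⁻¹ ≤ b⁻¹ * (Real.sqrt b)⁻¹ :=
          mul_le_mul_of_nonneg_right h1 (by positivity)
      _ = k32 b := (k32_eq_inv_mul b).symm
      _ ≤ k32 a + k32 b := le_add_of_nonneg_left (k32_nonneg ha)

/-- The key kernel Hölder-difference estimate. -/
lemma kdiff (z z' w : ℂ) : ‖(z - w)⁻¹ - (z' - w)⁻¹‖ ≤
    2 * Real.sqrt ‖z - z'‖ * (k32 ‖z - w‖ + k32 ‖z' - w‖) := by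
  have ha0 : (0:ℝ) ≤ ‖z - w‖ := norm_nonneg _
  have hb0 : (0:ℝ) ≤ ‖z' - w‖ := norm_nonneg _
  have ht0 : (0:ℝ) ≤ ‖z - z'‖ := norm_nonneg _
  have hK0 : 0 ≤ k32 ‖z - w‖ + k32 ‖z' - w‖ := add_nonneg (k32_nonneg ha0) (k32_nonneg hb0)
  by_cases hzw : z = w
  · by_cases hz'w : z' = w
    · have h0 : (z - w)⁻¹ - (z' - w)⁻¹ = 0 := by
        rw [sub_eq_zero_of_eq hzw, sub_eq_zero_of_eq hz'w, sub_self]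
      rw [h0, norm_zero]
      exact mul_nonneg (by positivity) hK0
    · have hb : (0:ℝ) < ‖z' - w‖ := norm_pos_iff.2 (sub_ne_zero.2 hz'w)
      have hLHS : ‖(z - w)⁻¹ - (z' - w)⁻¹‖ = ‖z' - w‖⁻¹ := by
        rw [sub_eq_zero_of_eq hzw, inv_zero, zero_sub, norm_neg, norm_inv]
      have htb : ‖z - z'‖ = ‖z' - w‖ := by rw [hzw, norm_sub_rev]
      rw [hLHS, htb]
      have hsb : 0 < Real.sqrt ‖z' - w‖ := Real.sqrt_pos.2 hb
      have hk : Real.sqrt ‖z' - w‖ * k32 ‖z' - w‖ = ‖z' - w‖⁻¹ := by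
        rw [k32_eq_inv_mul, mul_comm (Real.sqrt ‖z' - w‖), mul_assoc,
          inv_mul_cancel₀ hsb.ne', mul_one]
      nlinarith [hk, k32_nonneg (norm_nonneg (z - w)), k32_nonneg (norm_nonneg (z' - w)),
        hsb.le, mul_le_mul_of_nonneg_left
          (le_add_of_nonneg_left (k32_nonneg (norm_nonneg (z - w))) :
            k32 ‖z' - w‖ ≤ k32 ‖z - w‖ + k32 ‖z' - w‖) hsb.le]
  by_cases hz'w : z' = w
  · have ha : (0:ℝ) < ‖z - w‖ := norm_pos_iff.2 (sub_ne_zero.2 hzw)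
    have hLHS : ‖(z - w)⁻¹ - (z' - w)⁻¹‖ = ‖z - w‖⁻¹ := by
      rw [sub_eq_zero_of_eq hz'w, inv_zero, sub_zero, norm_inv]
    have hta : ‖z - z'‖ = ‖z - w‖ := by rw [hz'w]
    rw [hLHS, hta]
    have hsa : 0 < Real.sqrt ‖z - w‖ := Real.sqrt_pos.2 ha
    have hk : Real.sqrt ‖z - w‖ * k32 ‖z - w‖ = ‖z - w‖⁻¹ := by
      rw [k32_eq_inv_mul, mul_comm (Real.sqrt ‖z - w‖), mul_assoc,
        inv_mul_cancel₀ hsa.ne', mul_one]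
    nlinarith [hk, k32_nonneg (norm_nonneg (z - w)), k32_nonneg (norm_nonneg (z' - w)),
      hsa.le, mul_le_mul_of_nonneg_left
        (le_add_of_nonneg_right (k32_nonneg (norm_nonneg (z' - w))) :
          k32 ‖z - w‖ ≤ k32 ‖z - w‖ + k32 ‖z' - w‖) hsa.le]
  -- main case
  have hzw' : z - w ≠ 0 := sub_ne_zero.2 hzw
  have hz'w' : z' - w ≠ 0 := sub_ne_zero.2 hz'w
  set a := ‖z - w‖ with hadef
  set b := ‖z' - w‖ with hbdef
  set t := ‖z - z'‖ with htdef
  set K := k32 a + k32 b with hKdef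
  have ha : 0 < a := norm_pos_iff.2 hzw'
  have hb : 0 < b := norm_pos_iff.2 hz'w'
  set X := ‖(z - w)⁻¹ - (z' - w)⁻¹‖ with hXdef
  have hX0 : 0 ≤ X := norm_nonneg _
  have hident : (z - w)⁻¹ - (z' - w)⁻¹ = (z' - z) * ((z - w)⁻¹ * (z' - w)⁻¹) := by
    field_simp
    ring
  have hXP : X = t * (a⁻¹ * b⁻¹) := by
    rw [hXdef, hident, norm_mul, norm_mul, norm_inv, norm_inv, ← hadef, ← hbdef,
      norm_sub_rev z' z, ← htdef]
  have hXS : X ≤ a⁻¹ + b⁻¹ := by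
    rw [hXdef]
    calc ‖(z - w)⁻¹ - (z' - w)⁻¹‖ ≤ ‖(z - w)⁻¹‖ + ‖(z' - w)⁻¹‖ := norm_sub_le _ _
      _ = a⁻¹ + b⁻¹ := by rw [norm_inv, norm_inv]
  -- the two cross terms
  have hp : a⁻¹ * (Real.sqrt b)⁻¹ ≤ K := inv_sqrt_le_k32_add ha.le hb.le
  have hq : b⁻¹ * (Real.sqrt a)⁻¹ ≤ K := by
    rw [hKdef, add_comm]; exact inv_sqrt_le_k32_add hb.le ha.le
  have hsa : (Real.sqrt a) ^ 2 = a := Real.sq_sqrt ha.le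
  have hsb : (Real.sqrt b) ^ 2 = b := Real.sq_sqrt hb.le
  have hsa0 : 0 < Real.sqrt a := Real.sqrt_pos.2 ha
  have hsb0 : 0 < Real.sqrt b := Real.sqrt_pos.2 hb
  have hinner : a⁻¹ * b⁻¹ * (a⁻¹ + b⁻¹) ≤ 2 * K ^ 2 := by
    have hp2 : (a⁻¹ * (Real.sqrt b)⁻¹) ^ 2 = a⁻¹ * a⁻¹ * b⁻¹ := by
      rw [mul_pow, inv_pow, inv_pow, hsb, pow_two, mul_inv]
    have hq2 : (b⁻¹ * (Real.sqrt a)⁻¹) ^ 2 = b⁻¹ * b⁻¹ * a⁻¹ := by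
      rw [mul_pow, inv_pow, inv_pow, hsa, pow_two, mul_inv]
    have hpnn : 0 ≤ a⁻¹ * (Real.sqrt b)⁻¹ := by positivity
    have hqnn : 0 ≤ b⁻¹ * (Real.sqrt a)⁻¹ := by positivity
    have hexp : a⁻¹ * b⁻¹ * (a⁻¹ + b⁻¹) =
        (a⁻¹ * (Real.sqrt b)⁻¹) ^ 2 + (b⁻¹ * (Real.sqrt a)⁻¹) ^ 2 := by
      rw [hp2, hq2]; ring
    rw [hexp]
    nlinarith [hp, hq, hpnn, hqnn]
  have hXle : X ≤ Real.sqrt (t * (a⁻¹ * b⁻¹ * (a⁻¹ + b⁻¹))) := by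
    have hXX : X * X ≤ t * (a⁻¹ * b⁻¹ * (a⁻¹ + b⁻¹)) := by
      have h := mul_le_mul_of_nonneg_left hXS (show (0:ℝ) ≤ t * (a⁻¹ * b⁻¹) by positivity)
      nlinarith [h, hXP]
    calc X = Real.sqrt (X * X) := (Real.sqrt_mul_self hX0).symm
      _ ≤ Real.sqrt (t * (a⁻¹ * b⁻¹ * (a⁻¹ + b⁻¹))) := Real.sqrt_le_sqrt hXX
  calc X ≤ Real.sqrt (t * (a⁻¹ * b⁻¹ * (a⁻¹ + b⁻¹))) := hXle
    _ ≤ Real.sqrt (t * (2 * K ^ 2)) := by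
        apply Real.sqrt_le_sqrt
        exact mul_le_mul_of_nonneg_left hinner ht0
    _ ≤ Real.sqrt (t * (2 * K) ^ 2) := by
        apply Real.sqrt_le_sqrt
        have h2K : 2 * K ^ 2 ≤ (2 * K) ^ 2 := by nlinarith
        exact mul_le_mul_of_nonneg_left h2K ht0
    _ = Real.sqrt t * Real.sqrt ((2 * K) ^ 2) := Real.sqrt_mul ht0 _
    _ = Real.sqrt t * (2 * K) := by
        rw [Real.sqrt_sq (by positivity)]
    _ = 2 * Real.sqrt t * K := by ring

/-- Hölder-1/2 continuity implies continuity. -/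
lemma cont_of_holder {f : ℂ → ℂ} {M : ℝ} (hM : 0 ≤ M)
    (h : ∀ z z', ‖f z - f z'‖ ≤ M * Real.sqrt ‖z - z'‖) : Continuous f := by
  rw [Metric.continuous_iff]
  intro b ε hε
  refine ⟨(ε / (M + 1)) ^ 2, by positivity, fun a hab => ?_⟩
  have h1 : dist (f a) (f b) ≤ M * Real.sqrt ‖a - b‖ := by
    rw [dist_eq_norm]; exact h a b
  have h2 : Real.sqrt ‖a - b‖ < ε / (M + 1) := by
    have : ‖a - b‖ < (ε / (M + 1)) ^ 2 := by rwa [← dist_eq_norm]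
    calc Real.sqrt ‖a - b‖ < Real.sqrt ((ε / (M + 1)) ^ 2) :=
          (Real.sqrt_lt_sqrt (norm_nonneg _) this)
      _ = ε / (M + 1) := Real.sqrt_sq (by positivity)
  calc dist (f a) (f b) ≤ M * Real.sqrt ‖a - b‖ := h1
    _ ≤ M * (ε / (M + 1)) := by
        apply mul_le_mul_of_nonneg_left h2.le hM
    _ < ε := by
        rw [div_eq_inv_mul, ← mul_assoc]
        have : M * (M + 1)⁻¹ < 1 := by
          rw [mul_inv_lt_iff₀ (by linarith), one_mul]; linarith
        nlinarith

lemma schwartz_decay4 (q : 𝓢(ℂ, ℂ)) :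
    ∃ Cq : ℝ, 0 < Cq ∧ ∀ z : ℂ, ‖q z‖ ≤ Cq * (1 + ‖z‖) ^ (-4:ℝ) := by
  obtain ⟨C0, hC0p, hC0⟩ := q.decay 0 0
  obtain ⟨C4, hC4p, hC4⟩ := q.decay 4 0
  refine ⟨16*(C0+C4), by positivity, fun z => ?_⟩
  have h0 := hC0 z
  have h4 := hC4 z
  rw [norm_iteratedFDeriv_zero] at h0 h4
  rw [pow_zero, one_mul] at h0
  have hb : (1:ℝ) ≤ 1 + ‖z‖ := by linarith [norm_nonneg z]
  have hkey : ‖q z‖ * (1 + ‖z‖)^(4:ℕ) ≤ 16*(C0+C4) := by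
    have hx := norm_nonneg z
    have hexp : (1+‖z‖)^(4:ℕ) ≤ 16*(1 + ‖z‖^(4:ℕ)) := by
      nlinarith [sq_nonneg (‖z‖ - 1), sq_nonneg (‖z‖^2 - 1), sq_nonneg (‖z‖^2 - ‖z‖), hx,
        pow_nonneg hx 2, pow_nonneg hx 3, pow_nonneg hx 4]
    nlinarith [norm_nonneg (q z), h0, h4, mul_le_mul_of_nonneg_left hexp (norm_nonneg (q z))]
  have hpow : (1 + ‖z‖) ^ (-4:ℝ) = ((1 + ‖z‖)^(4:ℕ))⁻¹ := by
    rw [show (-4:ℝ) = -((4:ℕ):ℝ) by norm_num, Real.rpow_neg (by linarith), Real.rpow_natCast]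
  rw [hpow]
  have hpos : (0:ℝ) < (1 + ‖z‖)^(4:ℕ) := by positivity
  calc ‖q z‖ = ‖q z‖ * (1+‖z‖)^(4:ℕ) * ((1+‖z‖)^(4:ℕ))⁻¹ := by field_simp
    _ ≤ 16*(C0+C4) * ((1+‖z‖)^(4:ℕ))⁻¹ :=
        mul_le_mul_of_nonneg_right hkey (by positivity)

/-- The core uniform estimates for Cauchy-type transforms against a Schwartz-type
majorant `C (1+|w|)^{-4}`. -/
lemma core : ∃ B : ℝ, 1 ≤ B ∧ ∀ (C : ℝ), 0 ≤ C → ∀ (G : ℂ → ℂ), AEStronglyMeasurable G volume →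
    (∀ᵐ w : ℂ, ‖G w‖ ≤ C * (1 + ‖w‖) ^ (-4:ℝ)) →
    ∀ (κ : ℂ → ℂ → ℂ), (∀ z, AEStronglyMeasurable (κ z) volume) →
    (∀ z w, ‖κ z w‖ ≤ ‖z - w‖⁻¹) →
    (∀ z z' w, ‖κ z w - κ z' w‖ ≤ ‖(z - w)⁻¹ - (z' - w)⁻¹‖) →
    (∀ z : ℂ, Integrable (fun w => G w * κ z w) volume) ∧
    (∀ z : ℂ, ‖∫ w, G w * κ z w‖ ≤ C * B) ∧
    (∀ z z' : ℂ, ‖(∫ w, G w * κ z w) - ∫ w, G w * κ z' w‖ ≤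
      C * (4 * B) * Real.sqrt ‖z - z'‖) ∧
    (∀ z : ℂ, 2 ≤ ‖z‖ → ‖∫ w, G w * κ z w‖ ≤ C * (2 * B) / ‖z‖) := by
  classical
  set f₀ : ℂ → ℝ := (ball (0:ℂ) 1).indicator (fun u => k32 ‖u‖) with hf₀def
  have hf₀m : Measurable f₀ :=
    (measurable_k32.comp measurable_norm).indicator measurableSet_ball
  have hf₀i : Integrable f₀ volume :=
    (integrable_indicator_iff measurableSet_ball).2 integrableOn_k32_ball
  have hf₀nn : ∀ u, 0 ≤ f₀ u := fun u =>
    Set.indicator_nonneg (fun x _ => k32_nonneg (norm_nonneg x)) u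
  have hJ : Integrable (fun w : ℂ => (1 + ‖w‖) ^ (-3:ℝ)) volume := by
    apply integrable_one_add_norm
    rw [Complex.finrank_real_complex]; norm_num
  set D : ℂ → ℂ → ℝ := fun z w => f₀ (w - z) + (1 + ‖w‖) ^ (-3:ℝ) with hDdef
  have htrans : ∀ z : ℂ, Integrable (fun w => f₀ (w - z)) volume := by
    intro z
    exact ((measurePreserving_sub_right volume z).integrable_comp
      hf₀m.aestronglyMeasurable).2 hf₀i
  have hDint : ∀ z : ℂ, Integrable (D z) volume := fun z => (htrans z).add hJ
  set B0 : ℝ := (∫ u : ℂ, f₀ u) + ∫ w : ℂ, (1 + ‖w‖) ^ (-3:ℝ) with hB0def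
  have hDval : ∀ z : ℂ, ∫ w, D z w = B0 := by
    intro z
    rw [hDdef]
    simp only
    rw [integral_add (htrans z) hJ, integral_sub_right_eq_self f₀ z]
  have hDnn : ∀ z w, 0 ≤ D z w := fun z w =>
    add_nonneg (hf₀nn _) (Real.rpow_nonneg (by linarith [norm_nonneg w]) _)
  set B : ℝ := max 1 B0 with hBdef
  have hB1 : 1 ≤ B := le_max_left _ _
  have hB0B : B0 ≤ B := le_max_right _ _
  -- pointwise bounds
  have hball : ∀ z w : ℂ, ‖w - z‖ < 1 → f₀ (w - z) = k32 ‖w - z‖ := by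
    intro z w h
    exact Set.indicator_of_mem (mem_ball_zero_iff.2 h) _
  have hball' : ∀ z w : ℂ, ¬(‖w - z‖ < 1) → f₀ (w - z) = 0 := by
    intro z w h
    exact Set.indicator_of_notMem (fun hc => h (mem_ball_zero_iff.1 hc)) _
  have hbase : ∀ w : ℂ, (1:ℝ) ≤ 1 + ‖w‖ := fun w => by linarith [norm_nonneg w]
  have h4nn : ∀ w : ℂ, (0:ℝ) ≤ (1 + ‖w‖) ^ (-4:ℝ) := fun w =>
    Real.rpow_nonneg (by linarith [norm_nonneg w]) _
  have h41 : ∀ w : ℂ, (1 + ‖w‖) ^ (-4:ℝ) ≤ 1 := fun w =>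
    Real.rpow_le_one_of_one_le_of_nonpos (hbase w) (by norm_num)
  have h43 : ∀ w : ℂ, (1 + ‖w‖) ^ (-4:ℝ) ≤ (1 + ‖w‖) ^ (-3:ℝ) := fun w =>
    Real.rpow_le_rpow_of_exponent_le (hbase w) (by norm_num)
  have hP2 : ∀ z w : ℂ, (1 + ‖w‖) ^ (-4:ℝ) * k32 ‖z - w‖ ≤ D z w := by
    intro z w
    have hk32nn := k32_nonneg (norm_nonneg (z - w))
    by_cases h : ‖w - z‖ < 1
    · calc (1 + ‖w‖) ^ (-4:ℝ) * k32 ‖z - w‖ ≤ 1 * k32 ‖z - w‖ :=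
            mul_le_mul_of_nonneg_right (h41 w) hk32nn
        _ = f₀ (w - z) := by rw [one_mul, hball z w h, norm_sub_rev]
        _ ≤ D z w := le_add_of_nonneg_right (Real.rpow_nonneg (by linarith [norm_nonneg w]) _)
    · push_neg at h
      have h1 : k32 ‖z - w‖ ≤ 1 := k32_le_one (by rwa [norm_sub_rev])
      calc (1 + ‖w‖) ^ (-4:ℝ) * k32 ‖z - w‖ ≤ (1 + ‖w‖) ^ (-4:ℝ) * 1 :=
            mul_le_mul_of_nonneg_left h1 (h4nn w)
        _ ≤ (1 + ‖w‖) ^ (-3:ℝ) := by rw [mul_one]; exact h43 w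
        _ ≤ D z w := le_add_of_nonneg_left (hf₀nn _)
  have hP1 : ∀ z w : ℂ, (1 + ‖w‖) ^ (-4:ℝ) * ‖z - w‖⁻¹ ≤ D z w := by
    intro z w
    have hinn : (0:ℝ) ≤ ‖z - w‖⁻¹ := by positivity
    by_cases h : ‖w - z‖ < 1
    · have h2 : ‖z - w‖⁻¹ ≤ k32 ‖z - w‖ :=
        inv_le_k32 (norm_nonneg _) (by rw [norm_sub_rev]; linarith)
      calc (1 + ‖w‖) ^ (-4:ℝ) * ‖z - w‖⁻¹ ≤ (1 + ‖w‖) ^ (-4:ℝ) * k32 ‖z - w‖ :=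
            mul_le_mul_of_nonneg_left h2 (h4nn w)
        _ ≤ D z w := hP2 z w
    · push_neg at h
      have h1 : ‖z - w‖⁻¹ ≤ 1 := by
        rw [norm_sub_rev]
        have := inv_anti₀ (by norm_num : (0:ℝ) < 1) h
        simpa using this
      calc (1 + ‖w‖) ^ (-4:ℝ) * ‖z - w‖⁻¹ ≤ (1 + ‖w‖) ^ (-4:ℝ) * 1 :=
            mul_le_mul_of_nonneg_left h1 (h4nn w)
        _ ≤ (1 + ‖w‖) ^ (-3:ℝ) := by rw [mul_one]; exact h43 w
        _ ≤ D z w := le_add_of_nonneg_left (hf₀nn _)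
  have hP3 : ∀ z w : ℂ, 2 ≤ ‖z‖ → (1 + ‖w‖) ^ (-4:ℝ) * ‖z - w‖⁻¹ ≤ 2 / ‖z‖ * D z w := by
    intro z w hz
    have hz0 : (0:ℝ) < ‖z‖ := by linarith
    have hinn : (0:ℝ) ≤ ‖z - w‖⁻¹ := by positivity
    have h2z : (0:ℝ) ≤ 2 / ‖z‖ := by positivity
    by_cases h : ‖w - z‖ < 1
    · have hzw : ‖z‖ ≤ 1 + ‖w‖ := by
        have := norm_sub_norm_le z w
        have h' : ‖z - w‖ < 1 := by rwa [norm_sub_rev]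
        linarith
      have ha : (1 + ‖w‖) ^ (-4:ℝ) ≤ ‖z‖⁻¹ := by
        calc (1 + ‖w‖) ^ (-4:ℝ) ≤ (1 + ‖w‖) ^ (-1:ℝ) :=
              Real.rpow_le_rpow_of_exponent_le (hbase w) (by norm_num)
          _ = (1 + ‖w‖)⁻¹ := Real.rpow_neg_one _
          _ ≤ ‖z‖⁻¹ := inv_anti₀ hz0 hzw
      have hb : ‖z - w‖⁻¹ ≤ k32 ‖z - w‖ :=
        inv_le_k32 (norm_nonneg _) (by rw [norm_sub_rev]; linarith)
      have hzinv : ‖z‖⁻¹ ≤ 2 / ‖z‖ := by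
        rw [div_eq_mul_inv]
        nlinarith [inv_nonneg.2 hz0.le]
      calc (1 + ‖w‖) ^ (-4:ℝ) * ‖z - w‖⁻¹ ≤ ‖z‖⁻¹ * k32 ‖z - w‖ :=
            mul_le_mul ha hb hinn (by positivity)
        _ ≤ 2 / ‖z‖ * k32 ‖z - w‖ :=
            mul_le_mul_of_nonneg_right hzinv (k32_nonneg (norm_nonneg _))
        _ ≤ 2 / ‖z‖ * D z w := by
            apply mul_le_mul_of_nonneg_left _ h2z
            calc k32 ‖z - w‖ = f₀ (w - z) := by rw [hball z w h, norm_sub_rev]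
              _ ≤ D z w := le_add_of_nonneg_right
                  (Real.rpow_nonneg (by linarith [norm_nonneg w]) _)
    · push_neg at h
      rcases le_or_gt ‖w‖ (‖z‖ / 2) with hw | hw
      · have hzw : ‖z‖ / 2 ≤ ‖z - w‖ := by
          have := norm_sub_norm_le z w
          linarith
        have hb : ‖z - w‖⁻¹ ≤ 2 / ‖z‖ := by
          rw [show (2:ℝ) / ‖z‖ = (‖z‖ / 2)⁻¹ by rw [inv_div]]
          exact inv_anti₀ (by linarith) hzw
        calc (1 + ‖w‖) ^ (-4:ℝ) * ‖z - w‖⁻¹ ≤ (1 + ‖w‖) ^ (-3:ℝ) * (2 / ‖z‖) :=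
              mul_le_mul (h43 w) hb hinn (Real.rpow_nonneg (by linarith [norm_nonneg w]) _)
          _ = 2 / ‖z‖ * (1 + ‖w‖) ^ (-3:ℝ) := by ring
          _ ≤ 2 / ‖z‖ * D z w :=
              mul_le_mul_of_nonneg_left (le_add_of_nonneg_left (hf₀nn _)) h2z
      · have ha : (1 + ‖w‖) ^ (-4:ℝ) = (1 + ‖w‖)⁻¹ * (1 + ‖w‖) ^ (-3:ℝ) := by
          rw [← Real.rpow_neg_one (1 + ‖w‖), ← Real.rpow_add (by linarith [norm_nonneg w])]
          norm_num
        have hb : (1 + ‖w‖)⁻¹ ≤ 2 / ‖z‖ := by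
          rw [show (2:ℝ) / ‖z‖ = (‖z‖ / 2)⁻¹ by rw [inv_div]]
          exact inv_anti₀ (by linarith) (by linarith)
        have hc : ‖z - w‖⁻¹ ≤ 1 := by
          rw [norm_sub_rev]
          have := inv_anti₀ (by norm_num : (0:ℝ) < 1) h
          simpa using this
        calc (1 + ‖w‖) ^ (-4:ℝ) * ‖z - w‖⁻¹ ≤ (1 + ‖w‖) ^ (-4:ℝ) * 1 :=
              mul_le_mul_of_nonneg_left hc (h4nn w)
          _ = (1 + ‖w‖)⁻¹ * (1 + ‖w‖) ^ (-3:ℝ) := by rw [mul_one, ha]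
          _ ≤ 2 / ‖z‖ * (1 + ‖w‖) ^ (-3:ℝ) :=
              mul_le_mul_of_nonneg_right hb (Real.rpow_nonneg (by linarith [norm_nonneg w]) _)
          _ ≤ 2 / ‖z‖ * D z w :=
              mul_le_mul_of_nonneg_left (le_add_of_nonneg_left (hf₀nn _)) h2z
  refine ⟨B, hB1, ?_⟩
  intro C hC G hG hGb κ hκm hκn hκd
  have hInt : ∀ z : ℂ, Integrable (fun w => G w * κ z w) volume := by
    intro z
    refine Integrable.mono' ((hDint z).const_mul C) (hG.mul (hκm z)) ?_
    filter_upwards [hGb] with w hw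
    calc ‖G w * κ z w‖ = ‖G w‖ * ‖κ z w‖ := norm_mul _ _
      _ ≤ (C * (1 + ‖w‖) ^ (-4:ℝ)) * ‖z - w‖⁻¹ :=
          mul_le_mul hw (hκn z w) (norm_nonneg _) (by positivity)
      _ = C * ((1 + ‖w‖) ^ (-4:ℝ) * ‖z - w‖⁻¹) := by ring
      _ ≤ C * D z w := mul_le_mul_of_nonneg_left (hP1 z w) hC
  have hbd : ∀ z : ℂ, ‖∫ w, G w * κ z w‖ ≤ C * B := by
    intro z
    calc ‖∫ w, G w * κ z w‖ ≤ ∫ w, ‖G w * κ z w‖ := norm_integral_le_integral_norm _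
      _ ≤ ∫ w, C * D z w := by
          refine integral_mono_ae (hInt z).norm ((hDint z).const_mul C) ?_
          filter_upwards [hGb] with w hw
          calc ‖G w * κ z w‖ = ‖G w‖ * ‖κ z w‖ := norm_mul _ _
            _ ≤ (C * (1 + ‖w‖) ^ (-4:ℝ)) * ‖z - w‖⁻¹ :=
                mul_le_mul hw (hκn z w) (norm_nonneg _) (by positivity)
            _ = C * ((1 + ‖w‖) ^ (-4:ℝ) * ‖z - w‖⁻¹) := by ring
            _ ≤ C * D z w := mul_le_mul_of_nonneg_left (hP1 z w) hC
      _ = C * B0 := by rw [integral_const_mul, hDval z]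
      _ ≤ C * B := mul_le_mul_of_nonneg_left hB0B hC
  refine ⟨hInt, hbd, ?_, ?_⟩
  · intro z z'
    set t := Real.sqrt ‖z - z'‖ with htdef
    have ht0 : 0 ≤ t := Real.sqrt_nonneg _
    have hsub : (∫ w, G w * κ z w) - ∫ w, G w * κ z' w
        = ∫ w, G w * (κ z w - κ z' w) := by
      rw [← integral_sub (hInt z) (hInt z')]
      congr 1
      funext w
      ring
    rw [hsub]
    have hIs : Integrable (fun w => G w * (κ z w - κ z' w)) volume := by
      have : (fun w => G w * (κ z w - κ z' w))
          = fun w => G w * κ z w - G w * κ z' w := by funext w; ring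
      rw [this]
      exact (hInt z).sub (hInt z')
    calc ‖∫ w, G w * (κ z w - κ z' w)‖ ≤ ∫ w, ‖G w * (κ z w - κ z' w)‖ :=
          norm_integral_le_integral_norm _
      _ ≤ ∫ w, C * (2 * t) * (D z w + D z' w) := by
          refine integral_mono_ae hIs.norm
            (((hDint z).add (hDint z')).const_mul (C * (2 * t))) ?_
          filter_upwards [hGb] with w hw
          calc ‖G w * (κ z w - κ z' w)‖ = ‖G w‖ * ‖κ z w - κ z' w‖ := norm_mul _ _
            _ ≤ (C * (1 + ‖w‖) ^ (-4:ℝ)) * (2 * t * (k32 ‖z - w‖ + k32 ‖z' - w‖)) := by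
                apply mul_le_mul hw ((hκd z z' w).trans (kdiff z z' w)) (norm_nonneg _)
                  (by positivity)
            _ = C * (2 * t) * ((1 + ‖w‖) ^ (-4:ℝ) * k32 ‖z - w‖
                + (1 + ‖w‖) ^ (-4:ℝ) * k32 ‖z' - w‖) := by ring
            _ ≤ C * (2 * t) * (D z w + D z' w) := by
                apply mul_le_mul_of_nonneg_left (add_le_add (hP2 z w) (hP2 z' w))
                  (by positivity)
      _ = C * (2 * t) * (B0 + B0) := by
          rw [integral_const_mul]
          congr 1
          rw [integral_add (hDint z) (hDint z'), hDval z, hDval z']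
      _ ≤ C * (4 * B) * t := by
          have hB00 : 0 ≤ B0 := by
            have := hDval 0
            rw [← this]
            exact integral_nonneg (fun w => hDnn 0 w)
          nlinarith [mul_nonneg hC ht0]
  · intro z hz
    have hz0 : (0:ℝ) < ‖z‖ := by linarith
    calc ‖∫ w, G w * κ z w‖ ≤ ∫ w, ‖G w * κ z w‖ := norm_integral_le_integral_norm _
      _ ≤ ∫ w, C * (2 / ‖z‖ * D z w) := by
          refine integral_mono_ae (hInt z).norm (((hDint z).const_mul _).const_mul C) ?_
          filter_upwards [hGb] with w hw
          calc ‖G w * κ z w‖ = ‖G w‖ * ‖κ z w‖ := norm_mul _ _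
            _ ≤ (C * (1 + ‖w‖) ^ (-4:ℝ)) * ‖z - w‖⁻¹ :=
                mul_le_mul hw (hκn z w) (norm_nonneg _) (by positivity)
            _ = C * ((1 + ‖w‖) ^ (-4:ℝ) * ‖z - w‖⁻¹) := by ring
            _ ≤ C * (2 / ‖z‖ * D z w) := mul_le_mul_of_nonneg_left (hP3 z w hz) hC
      _ = C * (2 / ‖z‖ * B0) := by
          rw [integral_const_mul]
          congr 1
          rw [integral_const_mul, hDval z]
      _ ≤ C * (2 * B) / ‖z‖ := by
          have hB00 : 0 ≤ B0 := by
            have := hDval 0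
            rw [← this]
            exact integral_nonneg (fun w => hDnn 0 w)
          rw [div_eq_mul_inv, div_eq_mul_inv]
          have hzi : 0 ≤ (‖z‖)⁻¹ := by positivity
          nlinarith [mul_nonneg hC hzi, mul_le_mul_of_nonneg_left hB0B hC]

end
end Stmt19Aux

namespace Stmt19Aux

lemma norm_ek (a z : ℂ) : ‖ek a z‖ = 1 := by
  rw [ek, Complex.norm_exp]
  have h : (Complex.I * ((starRingEnd ℂ) a * z + a * (starRingEnd ℂ) z) / 2).re = 0 := by
    simp [Complex.div_re, Complex.mul_re, Complex.mul_im, Complex.add_re, Complex.add_im]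
    ring
  rw [h, Real.exp_zero]

lemma continuous_ek (a : ℂ) : Continuous (ek a) := by
  unfold ek
  apply Complex.continuous_exp.comp
  apply Continuous.div_const
  exact continuous_const.mul (((continuous_const.mul continuous_id).add
    (continuous_const.mul Complex.continuous_conj)))

end Stmt19Aux

set_option maxHeartbeats 2000000 in
/-- `F ↦ S^k_q[F]` defines a bounded linear operator on `L^∞(ℂ)` which is
compact. -/
theorem stmt19 (q : 𝓢(ℂ, ℂ)) (k : ℂ) :
    ∃ T : Lp ℂ ⊤ (volume : Measure ℂ) →L[ℂ] Lp ℂ ⊤ (volume : Measure ℂ),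
      IsCompactOperator T ∧
      ∀ F : Lp ℂ ⊤ (volume : Measure ℂ), (T F : ℂ → ℂ) =ᵐ[volume] Sk k (⇑q) (⇑F) := by
  classical
  obtain ⟨Cq, hCqp, hq⟩ := Stmt19Aux.schwartz_decay4 q
  obtain ⟨B, hB1, hcore⟩ := Stmt19Aux.core
  have hB0 : (0:ℝ) < B := lt_of_lt_of_le one_pos hB1
  have hπ : (0:ℝ) < Real.pi := Real.pi_pos
  have hnormπ : ‖((Real.pi : ℂ))⁻¹‖ = Real.pi⁻¹ := by
    rw [norm_inv, Complex.norm_real, Real.norm_eq_abs, abs_of_pos hπ]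
  set K : ℝ := Real.pi⁻¹ ^ 2 * Cq ^ 2 * B ^ 2 with hKdef
  have hK0 : 0 ≤ K := by positivity
  -- kernel facts
  have hκ1m : ∀ z : ℂ, AEStronglyMeasurable (fun w : ℂ => (z - w)⁻¹) volume := fun z =>
    ((measurable_const.sub measurable_id).inv).aestronglyMeasurable
  have hκ1n : ∀ z w : ℂ, ‖(z - w)⁻¹‖ ≤ ‖z - w‖⁻¹ := fun z w => le_of_eq (norm_inv _)
  have hκ1d : ∀ z z' w : ℂ, ‖(z - w)⁻¹ - (z' - w)⁻¹‖ ≤ ‖(z - w)⁻¹ - (z' - w)⁻¹‖ :=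
    fun _ _ _ => le_rfl
  have hκ2e : ∀ z w : ℂ, ((starRingEnd ℂ) z - (starRingEnd ℂ) w)⁻¹
      = (starRingEnd ℂ) ((z - w)⁻¹) := by
    intro z w; rw [map_inv₀, map_sub]
  have hκ2m : ∀ z : ℂ, AEStronglyMeasurable
      (fun w : ℂ => ((starRingEnd ℂ) z - (starRingEnd ℂ) w)⁻¹) volume := fun z =>
    ((measurable_const.sub Complex.continuous_conj.measurable).inv).aestronglyMeasurable
  have hκ2n : ∀ z w : ℂ, ‖((starRingEnd ℂ) z - (starRingEnd ℂ) w)⁻¹‖ ≤ ‖z - w‖⁻¹ := by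
    intro z w; rw [hκ2e, RCLike.norm_conj, norm_inv]
  have hκ2d : ∀ z z' w : ℂ, ‖((starRingEnd ℂ) z - (starRingEnd ℂ) w)⁻¹
      - ((starRingEnd ℂ) z' - (starRingEnd ℂ) w)⁻¹‖ ≤ ‖(z - w)⁻¹ - (z' - w)⁻¹‖ := by
    intro z z' w; rw [hκ2e, hκ2e, ← map_sub, RCLike.norm_conj]
  -- rewriting lemmas
  have hdz : ∀ (h : ℂ → ℂ) (z : ℂ), dzInv h z
      = (Real.pi : ℂ)⁻¹ * ∫ w : ℂ, h w * ((starRingEnd ℂ) z - (starRingEnd ℂ) w)⁻¹ := by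
    intro h z
    rw [dzInv]
    simp_rw [div_eq_mul_inv]
  have hSkr : ∀ (f : ℂ → ℂ) (z : ℂ), Sk k (⇑q) f z = (Real.pi : ℂ)⁻¹ *
      ∫ w : ℂ, (ek (-k) w * q w * dzInv (fun u => ek k u * conj (q u) * f u) w) * (z - w)⁻¹ := by
    intro f z
    rw [Sk, dbarInv]
    simp_rw [div_eq_mul_inv]
  -- master estimates
  have master : ∀ f : ℂ → ℂ, AEStronglyMeasurable f volume → ∀ c : ℝ, 0 ≤ c →
      (∀ᵐ w : ℂ ∂volume, ‖f w‖ ≤ c) →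
      (∀ z : ℂ, Integrable (fun u : ℂ => (ek k u * conj (q u) * f u) *
        ((starRingEnd ℂ) z - (starRingEnd ℂ) u)⁻¹) volume) ∧
      (∀ z : ℂ, Integrable (fun w : ℂ => (ek (-k) w * q w *
        dzInv (fun u => ek k u * conj (q u) * f u) w) * (z - w)⁻¹) volume) ∧
      Continuous (Sk k (⇑q) f) ∧
      (∀ z : ℂ, ‖Sk k (⇑q) f z‖ ≤ K * c) ∧
      (∀ z z' : ℂ, ‖Sk k (⇑q) f z - Sk k (⇑q) f z'‖ ≤ 4 * K * c * Real.sqrt ‖z - z'‖) ∧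
      (∀ z : ℂ, 2 ≤ ‖z‖ → ‖Sk k (⇑q) f z‖ ≤ 2 * K * c / ‖z‖) := by
    intro f hf c hc hfb
    have hqc : Continuous fun w : ℂ => conj (q w) := Complex.continuous_conj.comp q.continuous
    have hGin : AEStronglyMeasurable (fun u : ℂ => ek k u * conj (q u) * f u) volume :=
      (((Stmt19Aux.continuous_ek k).mul hqc).aestronglyMeasurable).mul hf
    have hGinb : ∀ᵐ u : ℂ ∂volume, ‖ek k u * conj (q u) * f u‖
        ≤ (Cq * c) * (1 + ‖u‖) ^ (-4:ℝ) := by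
      filter_upwards [hfb] with u hu
      calc ‖ek k u * conj (q u) * f u‖ = ‖ek k u‖ * ‖conj (q u)‖ * ‖f u‖ := by
            rw [norm_mul, norm_mul]
        _ = ‖q u‖ * ‖f u‖ := by rw [Stmt19Aux.norm_ek, one_mul, RCLike.norm_conj]
        _ ≤ (Cq * (1 + ‖u‖) ^ (-4:ℝ)) * c := mul_le_mul (hq u) hu (norm_nonneg _) (by positivity)
        _ = (Cq * c) * (1 + ‖u‖) ^ (-4:ℝ) := by ring
    obtain ⟨hIin, hbin, hhin, -⟩ := hcore (Cq * c) (by positivity) _ hGin hGinb _ hκ2m hκ2n hκ2d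
    have hdzc : Continuous fun z : ℂ => dzInv (fun u => ek k u * conj (q u) * f u) z := by
      have hc1 : Continuous fun z : ℂ => ∫ u : ℂ, (ek k u * conj (q u) * f u) *
          ((starRingEnd ℂ) z - (starRingEnd ℂ) u)⁻¹ :=
        Stmt19Aux.cont_of_holder (by positivity) hhin
      have he : (fun z : ℂ => dzInv (fun u => ek k u * conj (q u) * f u) z)
          = fun z => (Real.pi : ℂ)⁻¹ * ∫ u : ℂ, (ek k u * conj (q u) * f u) *
            ((starRingEnd ℂ) z - (starRingEnd ℂ) u)⁻¹ := by
        funext z; exact hdz _ z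
      rw [he]
      exact continuous_const.mul hc1
    have hdzb : ∀ w : ℂ, ‖dzInv (fun u => ek k u * conj (q u) * f u) w‖
        ≤ Real.pi⁻¹ * (Cq * c * B) := by
      intro w
      rw [hdz _ w, norm_mul, hnormπ]
      exact mul_le_mul_of_nonneg_left (hbin w) (by positivity)
    have hGout_cont : Continuous (fun w : ℂ => ek (-k) w * q w *
        dzInv (fun u => ek k u * conj (q u) * f u) w) :=
      ((Stmt19Aux.continuous_ek (-k)).mul q.continuous).mul hdzc
    have hGoutb : ∀ᵐ w : ℂ ∂volume, ‖ek (-k) w * q w *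
        dzInv (fun u => ek k u * conj (q u) * f u) w‖
        ≤ (Real.pi⁻¹ * Cq ^ 2 * B * c) * (1 + ‖w‖) ^ (-4:ℝ) := by
      refine ae_of_all _ (fun w => ?_)
      calc ‖ek (-k) w * q w * dzInv (fun u => ek k u * conj (q u) * f u) w‖
          = ‖ek (-k) w‖ * ‖q w‖ * ‖dzInv (fun u => ek k u * conj (q u) * f u) w‖ := by
            rw [norm_mul, norm_mul]
        _ = ‖q w‖ * ‖dzInv (fun u => ek k u * conj (q u) * f u) w‖ := by
            rw [Stmt19Aux.norm_ek, one_mul]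
        _ ≤ (Cq * (1 + ‖w‖) ^ (-4:ℝ)) * (Real.pi⁻¹ * (Cq * c * B)) :=
            mul_le_mul (hq w) (hdzb w) (norm_nonneg _) (by positivity)
        _ = (Real.pi⁻¹ * Cq ^ 2 * B * c) * (1 + ‖w‖) ^ (-4:ℝ) := by ring
    obtain ⟨hIout, hbout, hhout, hdout⟩ := hcore (Real.pi⁻¹ * Cq ^ 2 * B * c) (by positivity) _
      hGout_cont.aestronglyMeasurable hGoutb _ hκ1m hκ1n hκ1d
    have hbnd : ∀ z : ℂ, ‖Sk k (⇑q) f z‖ ≤ K * c := by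
      intro z
      calc ‖Sk k (⇑q) f z‖ = Real.pi⁻¹ * ‖∫ w : ℂ, (ek (-k) w * q w *
            dzInv (fun u => ek k u * conj (q u) * f u) w) * (z - w)⁻¹‖ := by
            rw [hSkr f z, norm_mul, hnormπ]
        _ ≤ Real.pi⁻¹ * ((Real.pi⁻¹ * Cq ^ 2 * B * c) * B) :=
            mul_le_mul_of_nonneg_left (hbout z) (by positivity)
        _ = K * c := by rw [hKdef]; ring
    have hhol : ∀ z z' : ℂ, ‖Sk k (⇑q) f z - Sk k (⇑q) f z'‖
        ≤ 4 * K * c * Real.sqrt ‖z - z'‖ := by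
      intro z z'
      rw [hSkr f z, hSkr f z', ← mul_sub, norm_mul, hnormπ]
      calc Real.pi⁻¹ * ‖(∫ w : ℂ, (ek (-k) w * q w *
            dzInv (fun u => ek k u * conj (q u) * f u) w) * (z - w)⁻¹) -
            ∫ w : ℂ, (ek (-k) w * q w *
            dzInv (fun u => ek k u * conj (q u) * f u) w) * (z' - w)⁻¹‖
          ≤ Real.pi⁻¹ * ((Real.pi⁻¹ * Cq ^ 2 * B * c) * (4 * B) * Real.sqrt ‖z - z'‖) :=
            mul_le_mul_of_nonneg_left (hhout z z') (by positivity)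
        _ = 4 * K * c * Real.sqrt ‖z - z'‖ := by rw [hKdef]; ring
    have hdec : ∀ z : ℂ, 2 ≤ ‖z‖ → ‖Sk k (⇑q) f z‖ ≤ 2 * K * c / ‖z‖ := by
      intro z hz
      calc ‖Sk k (⇑q) f z‖ = Real.pi⁻¹ * ‖∫ w : ℂ, (ek (-k) w * q w *
            dzInv (fun u => ek k u * conj (q u) * f u) w) * (z - w)⁻¹‖ := by
            rw [hSkr f z, norm_mul, hnormπ]
        _ ≤ Real.pi⁻¹ * ((Real.pi⁻¹ * Cq ^ 2 * B * c) * (2 * B) / ‖z‖) :=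
            mul_le_mul_of_nonneg_left (hdout z hz) (by positivity)
        _ = 2 * K * c / ‖z‖ := by rw [hKdef, div_eq_mul_inv, div_eq_mul_inv]; ring
    exact ⟨hIin, hIout, Stmt19Aux.cont_of_holder (by positivity) hhol, hbnd, hhol, hdec⟩
  -- L^∞ facts
  have haeF : ∀ F : Lp ℂ ⊤ (volume : Measure ℂ), ∀ᵐ w : ℂ ∂volume, ‖F w‖ ≤ ‖F‖ := by
    intro F
    have h1 := MeasureTheory.ae_le_eLpNormEssSup (f := (⇑F : ℂ → ℂ)) (μ := volume)
    have h2 : eLpNormEssSup (⇑F) volume ≠ ⊤ := by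
      rw [← eLpNorm_exponent_top]; exact Lp.eLpNorm_ne_top F
    filter_upwards [h1] with w hw
    have h3 := ENNReal.toReal_mono h2 hw
    rw [toReal_enorm] at h3
    rwa [Lp.norm_def, eLpNorm_exponent_top]
  have hmaster := fun F : Lp ℂ ⊤ (volume : Measure ℂ) =>
    master (⇑F) (Lp.aestronglyMeasurable F) ‖F‖ (norm_nonneg F) (haeF F)
  have hmem : ∀ F : Lp ℂ ⊤ (volume : Measure ℂ), MemLp (Sk k (⇑q) ⇑F) ⊤ volume := fun F =>
    memLp_top_of_bound (hmaster F).2.2.1.aestronglyMeasurable (K * ‖F‖)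
      (ae_of_all _ (hmaster F).2.2.2.1)
  -- congruence under a.e. equality of the input
  have hcongr : ∀ f g : ℂ → ℂ, f =ᵐ[volume] g → ∀ z, Sk k (⇑q) f z = Sk k (⇑q) g z := by
    intro f g hfg z
    have hinner : ∀ w : ℂ, dzInv (fun u => ek k u * conj (q u) * f u) w
        = dzInv (fun u => ek k u * conj (q u) * g u) w := by
      intro w
      rw [dzInv, dzInv]
      congr 1
      apply integral_congr_ae
      filter_upwards [hfg] with u hu
      rw [hu]
    rw [Sk, Sk, dbarInv, dbarInv]
    congr 2
    funext w
    rw [hinner w]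
  -- pointwise additivity and scalar action
  have haddp : ∀ F G : Lp ℂ ⊤ (volume : Measure ℂ), ∀ z : ℂ,
      Sk k (⇑q) (⇑F + ⇑G) z = Sk k (⇑q) ⇑F z + Sk k (⇑q) ⇑G z := by
    intro F G z
    have hinner : ∀ w : ℂ, dzInv (fun u => ek k u * conj (q u) * (⇑F + ⇑G) u) w
        = dzInv (fun u => ek k u * conj (q u) * (⇑F) u) w
          + dzInv (fun u => ek k u * conj (q u) * (⇑G) u) w := by
      intro w
      rw [hdz, hdz, hdz, ← mul_add]
      congr 1
      have he : (fun u : ℂ => (ek k u * conj (q u) * (⇑F + ⇑G) u) *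
          ((starRingEnd ℂ) w - (starRingEnd ℂ) u)⁻¹)
          = fun u => (ek k u * conj (q u) * (⇑F) u) *
              ((starRingEnd ℂ) w - (starRingEnd ℂ) u)⁻¹
            + (ek k u * conj (q u) * (⇑G) u) *
              ((starRingEnd ℂ) w - (starRingEnd ℂ) u)⁻¹ := by
        funext u
        simp only [Pi.add_apply]
        ring
      rw [he, integral_add ((hmaster F).1 w) ((hmaster G).1 w)]
    rw [hSkr, hSkr, hSkr, ← mul_add]
    congr 1
    have he : (fun w : ℂ => (ek (-k) w * q w *
        dzInv (fun u => ek k u * conj (q u) * (⇑F + ⇑G) u) w) * (z - w)⁻¹)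
        = fun w => (ek (-k) w * q w *
            dzInv (fun u => ek k u * conj (q u) * (⇑F) u) w) * (z - w)⁻¹
          + (ek (-k) w * q w *
            dzInv (fun u => ek k u * conj (q u) * (⇑G) u) w) * (z - w)⁻¹ := by
      funext w
      rw [hinner w]
      ring
    rw [he, integral_add ((hmaster F).2.1 z) ((hmaster G).2.1 z)]
  have hsmulp : ∀ (a : ℂ) (F : Lp ℂ ⊤ (volume : Measure ℂ)), ∀ z : ℂ,
      Sk k (⇑q) (a • ⇑F) z = a * Sk k (⇑q) ⇑F z := by
    intro a F z
    have hinner : ∀ w : ℂ, dzInv (fun u => ek k u * conj (q u) * (a • ⇑F) u) w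
        = a * dzInv (fun u => ek k u * conj (q u) * (⇑F) u) w := by
      intro w
      rw [hdz, hdz]
      have he : (fun u : ℂ => (ek k u * conj (q u) * (a • ⇑F) u) *
          ((starRingEnd ℂ) w - (starRingEnd ℂ) u)⁻¹)
          = fun u => a * ((ek k u * conj (q u) * (⇑F) u) *
            ((starRingEnd ℂ) w - (starRingEnd ℂ) u)⁻¹) := by
        funext u
        simp only [Pi.smul_apply, smul_eq_mul]
        ring
      rw [he, integral_const_mul]
      ring
    rw [hSkr, hSkr]
    have he : (fun w : ℂ => (ek (-k) w * q w *
        dzInv (fun u => ek k u * conj (q u) * (a • ⇑F) u) w) * (z - w)⁻¹)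
        = fun w => a * ((ek (-k) w * q w *
          dzInv (fun u => ek k u * conj (q u) * (⇑F) u) w) * (z - w)⁻¹) := by
      funext w
      rw [hinner w]
      ring
    rw [he, integral_const_mul]
    ring
  -- the linear map
  set L : Lp ℂ ⊤ (volume : Measure ℂ) →ₗ[ℂ] Lp ℂ ⊤ (volume : Measure ℂ) :=
    { toFun := fun F => (hmem F).toLp (Sk k (⇑q) ⇑F)
      map_add' := by
        intro F G
        apply Lp.ext
        apply ((hmem (F + G)).coeFn_toLp).trans
        have h1 : Sk k (⇑q) ⇑(F + G) =ᵐ[volume] Sk k (⇑q) ⇑F + Sk k (⇑q) ⇑G := by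
          apply ae_of_all
          intro z
          rw [hcongr _ _ (Lp.coeFn_add F G) z, haddp F G z, Pi.add_apply]
        refine h1.trans ?_
        exact ((hmem F).coeFn_toLp.symm.add (hmem G).coeFn_toLp.symm).trans
          (Lp.coeFn_add _ _).symm
      map_smul' := by
        intro a F
        apply Lp.ext
        apply ((hmem (a • F)).coeFn_toLp).trans
        have h1 : Sk k (⇑q) ⇑(a • F) =ᵐ[volume] a • Sk k (⇑q) ⇑F := by
          apply ae_of_all
          intro z
          rw [hcongr _ _ (Lp.coeFn_smul a F) z, hsmulp a F z, Pi.smul_apply, smul_eq_mul]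
        refine h1.trans ?_
        simp only [RingHom.id_apply]
        have h2 : (a • Sk k (⇑q) ⇑F : ℂ → ℂ)
            =ᵐ[volume] a • (⇑((hmem F).toLp (Sk k (⇑q) ⇑F)) : ℂ → ℂ) :=
          (hmem F).coeFn_toLp.symm.mono (fun w hw => by
            simp only [Pi.smul_apply]; rw [hw])
        exact h2.trans (Lp.coeFn_smul a _).symm } with hL
  have hLb : ∀ F : Lp ℂ ⊤ (volume : Measure ℂ), ‖L F‖ ≤ K * ‖F‖ := by
    intro F
    have h0 : L F = (hmem F).toLp (Sk k (⇑q) ⇑F) := rfl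
    rw [h0, Lp.norm_toLp]
    refine ENNReal.toReal_le_of_le_ofReal (by positivity) ?_
    have h := eLpNorm_le_of_ae_bound (μ := volume) (p := (⊤:ℝ≥0∞))
      (ae_of_all _ ((hmaster F).2.2.2.1))
    simpa [ENNReal.toReal_top, inv_zero, ENNReal.rpow_zero, one_mul] using h
  set T := L.mkContinuous K hLb with hT
  have hTapp : ∀ F, T F = (hmem F).toLp (Sk k (⇑q) ⇑F) := fun F => rfl
  refine ⟨T, ?_, fun F => by rw [hTapp F]; exact (hmem F).coeFn_toLp⟩
  -- compactness
  have hsubp : ∀ (F F' : Lp ℂ ⊤ (volume : Measure ℂ)) (z : ℂ),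
      Sk k (⇑q) ⇑(F - F') z = Sk k (⇑q) ⇑F z - Sk k (⇑q) ⇑F' z := by
    intro F F' z
    have h1 : F - F' = F + (-1 : ℂ) • F' := by rw [neg_one_smul]; exact sub_eq_add_neg F F'
    rw [h1, hcongr _ _ (Lp.coeFn_add F ((-1 : ℂ) • F')) z, haddp F ((-1 : ℂ) • F') z,
      hcongr _ _ (Lp.coeFn_smul (-1 : ℂ) F') z, hsmulp (-1 : ℂ) F' z]
    ring
  have hTd : ∀ (F F' : Lp ℂ ⊤ (volume : Measure ℂ)) (C : ℝ), 0 ≤ C →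
      (∀ z, ‖Sk k (⇑q) ⇑(F - F') z‖ ≤ C) → dist (T F) (T F') ≤ C := by
    intro F F' C hC hb
    rw [dist_eq_norm, ← map_sub, hTapp (F - F'), Lp.norm_toLp]
    refine ENNReal.toReal_le_of_le_ofReal hC ?_
    have h := eLpNorm_le_of_ae_bound (μ := volume) (p := (⊤:ℝ≥0∞)) (ae_of_all _ hb)
    simpa [ENNReal.toReal_top, inv_zero, ENNReal.rpow_zero, one_mul] using h
  refine ⟨closure (⇑T '' Metric.closedBall 0 1), ?_, ?_⟩
  swap
  · exact mem_of_superset (Metric.closedBall_mem_nhds 0 one_pos)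
      (fun x hx => subset_closure ⟨x, hx, rfl⟩)
  refine TotallyBounded.isCompact_of_isClosed (totallyBounded_closure.2 ?_) isClosed_closure
  rw [Metric.totallyBounded_iff]
  intro ε hε
  have hK1 : (0:ℝ) < K + 1 := by positivity
  set R : ℝ := max 2 (32 * (K + 1) / ε) with hR
  have hR2 : (2:ℝ) ≤ R := le_max_left _ _
  have hRge : 32 * (K + 1) / ε ≤ R := le_max_right _ _
  have hR0 : (0:ℝ) < R := by linarith
  set δ : ℝ := (ε / (64 * (K + 1))) ^ 2 with hδdef
  have hδ0 : (0:ℝ) < δ := by positivity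
  obtain ⟨s, hsfin, hscover⟩ := (Metric.totallyBounded_iff.1
    (isCompact_closedBall (0:ℂ) R).totallyBounded) δ hδ0
  haveI : Fintype ↥s := hsfin.fintype
  set Φ : Lp ℂ ⊤ (volume : Measure ℂ) → (↥s → ℂ) := fun F i => Sk k (⇑q) ⇑F ↑i with hΦ
  have hWsub : Φ '' Metric.closedBall 0 1 ⊆ Metric.closedBall (0 : ↥s → ℂ) K := by
    rintro x ⟨F, hF, rfl⟩
    rw [mem_closedBall_zero_iff, pi_norm_le_iff_of_nonneg hK0]
    intro i
    calc ‖Φ F i‖ ≤ K * ‖F‖ := (hmaster F).2.2.2.1 ↑i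
      _ ≤ K * 1 := mul_le_mul_of_nonneg_left (mem_closedBall_zero_iff.1 hF) hK0
      _ = K := mul_one K
  have hWtb : TotallyBounded (Φ '' Metric.closedBall 0 1) :=
    (isCompact_closedBall (0 : ↥s → ℂ) K).totallyBounded.subset hWsub
  obtain ⟨Y, hYsub, hYfin, hYcover⟩ := totallyBounded_iff_subset.1 hWtb
    {p : (↥s → ℂ) × (↥s → ℂ) | dist p.1 p.2 < ε / 8}
    (Metric.dist_mem_uniformity (by positivity))
  have hex : ∀ y ∈ Y, ∃ F, F ∈ Metric.closedBall (0 : Lp ℂ ⊤ (volume : Measure ℂ)) 1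
      ∧ Φ F = y := by
    intro y hy
    obtain ⟨F, hF, hFy⟩ := hYsub hy
    exact ⟨F, hF, hFy⟩
  choose! g hgU hgΦ using hex
  refine ⟨(fun y => T (g y)) '' Y, hYfin.image _, ?_⟩
  rintro x ⟨F, hF, rfl⟩
  obtain ⟨y, hyY, hyd⟩ := Set.mem_iUnion₂.1 (hYcover (Set.mem_image_of_mem Φ hF))
  have hyd' : dist (Φ F) y < ε / 8 := hyd
  have hF2 : ‖F - g y‖ ≤ 2 := by
    calc ‖F - g y‖ ≤ ‖F‖ + ‖g y‖ := norm_sub_le _ _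
      _ ≤ 1 + 1 := add_le_add (mem_closedBall_zero_iff.1 hF)
          (mem_closedBall_zero_iff.1 (hgU y hyY))
      _ = 2 := by norm_num
  have hae2 : ∀ᵐ w : ℂ ∂volume, ‖(⇑(F - g y) : ℂ → ℂ) w‖ ≤ 2 := by
    filter_upwards [haeF (F - g y)] with w hw
    exact hw.trans hF2
  obtain ⟨-, -, -, hbd2, hhol2, hdec2⟩ := master (⇑(F - g y))
    (Lp.aestronglyMeasurable _) 2 (by norm_num) hae2
  have hsqδ : Real.sqrt δ = ε / (64 * (K + 1)) := by
    rw [hδdef, Real.sqrt_sq (by positivity)]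
  have key : ∀ z : ℂ, ‖Sk k (⇑q) ⇑(F - g y) z‖ ≤ ε / 4 := by
    intro z
    rcases le_or_gt ‖z‖ R with hzR | hzR
    · obtain ⟨zi, hzis, hzid⟩ := Set.mem_iUnion₂.1 (hscover (mem_closedBall_zero_iff.2 hzR))
      have hzid' : dist z zi < δ := Metric.mem_ball.1 hzid
      have h1 : ‖Sk k (⇑q) ⇑(F - g y) z - Sk k (⇑q) ⇑(F - g y) zi‖ ≤ ε / 8 := by
        calc ‖Sk k (⇑q) ⇑(F - g y) z - Sk k (⇑q) ⇑(F - g y) zi‖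
            ≤ 4 * K * 2 * Real.sqrt ‖z - zi‖ := hhol2 z zi
          _ ≤ 4 * K * 2 * Real.sqrt δ := by
              apply mul_le_mul_of_nonneg_left (Real.sqrt_le_sqrt ?_) (by positivity)
              rw [← dist_eq_norm]; exact hzid'.le
          _ = (K / (K + 1)) * (ε / 8) := by rw [hsqδ]; field_simp; ring
          _ ≤ 1 * (ε / 8) := by
              apply mul_le_mul_of_nonneg_right _ (by positivity)
              rw [div_le_one hK1]; linarith
          _ = ε / 8 := one_mul _
      have h2 : ‖Sk k (⇑q) ⇑(F - g y) zi‖ ≤ ε / 8 := by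
        rw [hsubp F (g y) zi]
        have hco : dist (Φ F ⟨zi, hzis⟩) (Φ (g y) ⟨zi, hzis⟩) ≤ dist (Φ F) (Φ (g y)) :=
          dist_le_pi_dist _ _ _
        rw [hgΦ y hyY] at hco
        have hyi : Φ (g y) ⟨zi, hzis⟩ = y ⟨zi, hzis⟩ := by rw [hgΦ y hyY]
        have hcoord : Sk k (⇑q) ⇑F zi - Sk k (⇑q) ⇑(g y) zi
            = Φ F ⟨zi, hzis⟩ - y ⟨zi, hzis⟩ := by rw [← hyi]
        rw [hcoord, ← dist_eq_norm]
        calc dist (Φ F ⟨zi, hzis⟩) (y ⟨zi, hzis⟩) ≤ dist (Φ F) y := hco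
          _ ≤ ε / 8 := hyd'.le
      calc ‖Sk k (⇑q) ⇑(F - g y) z‖
          = ‖(Sk k (⇑q) ⇑(F - g y) z - Sk k (⇑q) ⇑(F - g y) zi)
            + Sk k (⇑q) ⇑(F - g y) zi‖ := by rw [sub_add_cancel]
        _ ≤ ‖Sk k (⇑q) ⇑(F - g y) z - Sk k (⇑q) ⇑(F - g y) zi‖
            + ‖Sk k (⇑q) ⇑(F - g y) zi‖ := norm_add_le _ _
        _ ≤ ε / 8 + ε / 8 := add_le_add h1 h2
        _ = ε / 4 := by ring
    · have hz2 : (2:ℝ) ≤ ‖z‖ := le_trans hR2 hzR.le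
      have hz0 : (0:ℝ) < ‖z‖ := by linarith
      calc ‖Sk k (⇑q) ⇑(F - g y) z‖ ≤ 2 * K * 2 / ‖z‖ := hdec2 z hz2
        _ ≤ ε / 8 := by
            rw [div_le_iff₀ hz0]
            have h1 : 32 * (K + 1) / ε ≤ ‖z‖ := le_trans hRge hzR.le
            rw [div_le_iff₀ (by positivity : (0:ℝ) < ε)] at h1
            nlinarith [hε.le, hK0, hz0.le]
        _ ≤ ε / 4 := by linarith
  have hdTFy : dist (T F) (T (g y)) ≤ ε / 4 := hTd F (g y) (ε / 4) (by positivity) key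
  refine Set.mem_iUnion₂.2 ⟨T (g y), Set.mem_image_of_mem _ hyY, ?_⟩
  rw [Metric.mem_ball]
  calc dist (T F) (T (g y)) ≤ ε / 4 := hdTFy
    _ < ε := by linarith
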